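/- Let C be a flag code of type (t_1,...,t_r) on F_q^n with d_f(C) > D(i_1,...,i_M)^{(t,n)} for some indices 1 ≤ i_1 < ... < i_M ≤ r. Then |C| ≤ |F_q((t_{i_1},...,t_{i_M}), n)|, the number of flags of type (t_{i_1},...,t_{i_M}) on F_q^n, which equals the product of Gaussian binomial coefficients [n choose t_{i_1}]_q [n - t_{i_1} choose t_{i_2} - t_{i_1}]_q ... [n - t_{i_{M-1}} choose n - t_{i_M}]_q. -/

import Mathlib

open Module Finset

/-- Subspace distance `d_S(U,V) = dim(U+V) - dim(U∩V)`. -/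
noncomputable def subDist {K : Type*} [Field K] {n : ℕ}
    (U V : Submodule K (Fin n → K)) : ℕ :=
  finrank K ↥(U ⊔ V) - finrank K ↥(U ⊓ V)

/-- Flag distance (flags indexed by `1, ..., r`). -/
noncomputable def flagDist {K : Type*} [Field K] {n : ℕ} (r : ℕ)
    (F F' : ℕ → Submodule K (Fin n → K)) : ℕ :=
  ∑ j ∈ Finset.Icc 1 r, subDist (F j) (F' j)

/-- `D(i_1,...,i_M)^{(t,n)} = Σ_{j=1}^r min{2t_j, 2(n-t_j), 2|t_j-t_{i_1}|, ..., 2|t_j-t_{i_M}|}`. -/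
def DmultiType (n r M : ℕ) (hM : 1 ≤ M) (t i : ℕ → ℕ) : ℕ :=
  ∑ j ∈ Finset.Icc 1 r,
    min (2 * t j) (min (2 * (n - t j))
      ((Finset.Icc 1 M).inf' (Finset.nonempty_Icc.mpr hM)
        (fun l => 2 * ((t j : ℤ) - (t (i l) : ℤ)).natAbs)))

/-- The Gaussian binomial coefficient `[a choose b]_q` (the division is exact). -/
def gaussBinom (q a b : ℕ) : ℕ :=
  (∏ s ∈ Finset.range b, (q ^ (a - s) - 1)) / (∏ s ∈ Finset.range b, (q ^ (s + 1) - 1))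

set_option linter.unusedSectionVars false
section Aux
variable {K V : Type*} [Field K] [Fintype K] [AddCommGroup V] [Module K V]
  [FiniteDimensional K V]

variable (V) in
lemma auxFiniteV (K : Type*) [Field K] [Fintype K] [Module K V] [FiniteDimensional K V] :
    Finite V := by
  have e := (Module.finBasis K V).equivFun
  exact Finite.of_equiv _ e.symm.toEquiv

lemma auxFiniteSub : Finite (Submodule K V) :=
  by
  have : Finite V := auxFiniteV V K
  exact Finite.of_injective (fun W => (W : Set V)) (fun _ _ h => SetLike.coe_injective h)

/-- rank-nullity for `map mkQ`. -/
lemma finrank_map_mkQ (W p : Submodule K V) (h : W ≤ p) :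
    finrank K ↥(p.map W.mkQ) + finrank K ↥W = finrank K ↥p := by
  have g := LinearMap.finrank_range_add_finrank_ker (W.mkQ.comp p.subtype)
  rw [LinearMap.range_comp, Submodule.range_subtype, LinearMap.ker_comp,
    Submodule.ker_mkQ] at g
  rw [← g]
  congr 1
  exact (Submodule.comapSubtypeEquivOfLe h).finrank_eq.symm

lemma finrank_comap_mkQ (W : Submodule K V) (q : Submodule K (V ⧸ W)) :
    finrank K ↥(q.comap W.mkQ) = finrank K ↥q + finrank K ↥W := by
  have h : W ≤ q.comap W.mkQ := by
    intro x hx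
    simp [Submodule.mem_comap, Submodule.Quotient.mk_eq_zero W |>.mpr hx,
      Submodule.mkQ_apply]
  have := finrank_map_mkQ W (q.comap W.mkQ) h
  rw [Submodule.map_comap_eq_of_surjective (Submodule.mkQ_surjective W)] at this
  omega

lemma map_mkQ_self (W : Submodule K V) : W.map W.mkQ = ⊥ := by
  rw [eq_bot_iff]
  rw [Submodule.map_le_iff_le_comap, Submodule.comap_bot, Submodule.ker_mkQ]


local notation "q" => Fintype.card K

lemma card_indep_fiber (d : ℕ) (W : Submodule K V) (hW : finrank K ↥W = d) :
    Nat.card { x : { s : Fin d → V // LinearIndependent K s } //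
        Submodule.span K (Set.range x.1) = W } =
      ∏ s ∈ Finset.range d, (q ^ d - q ^ s) := by
  have hFin : Finite V := auxFiniteV V K
  have e : { x : { s : Fin d → V // LinearIndependent K s } //
        Submodule.span K (Set.range x.1) = W } ≃
      { s : Fin d → ↥W // LinearIndependent K s } :=
    { toFun := fun x => ⟨fun i => ⟨x.1.1 i, by
        have := Submodule.subset_span (R := K) (Set.mem_range_self (f := x.1.1) i)
        rwa [x.2] at this⟩,
        LinearIndependent.of_comp W.subtype x.1.2⟩
      invFun := fun s => ⟨⟨fun i => (s.1 i : V),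
          s.2.map' W.subtype (Submodule.ker_subtype _)⟩, by
        have h1 : Set.range (fun i => ((s.1 i : V))) = W.subtype '' Set.range s.1 := by
          rw [← Set.range_comp]; rfl
        have h2 : Submodule.span K (Set.range s.1) = (⊤ : Submodule K ↥W) := by
          apply Submodule.eq_of_le_of_finrank_eq le_top
          rw [finrank_span_eq_card s.2, finrank_top]
          simp [hW]
        simp only [h1, ← Submodule.map_span, h2, Submodule.map_top,
          Submodule.range_subtype]⟩
      left_inv := fun x => by ext i; rfl
      right_inv := fun s => by ext i; rfl }
  rw [Nat.card_congr e]
  have : finrank K ↥W = d := hW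
  rw [card_linearIndependent (by omega : d ≤ finrank K ↥W), hW]
  exact Fin.prod_univ_eq_prod_range (fun s => q ^ d - q ^ s) d

lemma card_submodule_mul (d : ℕ) (hd : d ≤ finrank K V) :
    Nat.card {W : Submodule K V // finrank K ↥W = d} *
        ∏ s ∈ Finset.range d, (q ^ d - q ^ s) =
      ∏ s ∈ Finset.range d, (q ^ finrank K V - q ^ s) := by
  have hFin : Finite V := auxFiniteV V K
  have hFS : Finite (Submodule K V) := auxFiniteSub
  set π : { s : Fin d → V // LinearIndependent K s } →
      {W : Submodule K V // finrank K ↥W = d} :=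
    fun s => ⟨Submodule.span K (Set.range s.1), by
      rw [finrank_span_eq_card s.2]; simp⟩ with hπ
  have e := Equiv.sigmaFiberEquiv π
  haveI : Fintype {W : Submodule K V // finrank K ↥W = d} := Fintype.ofFinite _
  haveI : ∀ W : {W : Submodule K V // finrank K ↥W = d},
      Fintype {x // π x = W} := fun W => Fintype.ofFinite _
  have hcards : Nat.card { s : Fin d → V // LinearIndependent K s } =
      ∑ W : {W : Submodule K V // finrank K ↥W = d}, Nat.card {x // π x = W} := by
    rw [← Nat.card_congr e]
    simp [Nat.card_eq_fintype_card]
  have hfib : ∀ W : {W : Submodule K V // finrank K ↥W = d},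
      Nat.card {x // π x = W} = ∏ s ∈ Finset.range d, (q ^ d - q ^ s) := by
    intro W
    rw [← card_indep_fiber d W.1 W.2]
    apply Nat.card_congr
    apply Equiv.subtypeEquivRight
    intro x
    constructor
    · intro h; rw [← h]
    · intro h; exact Subtype.ext h
  rw [card_linearIndependent hd,
    Fin.prod_univ_eq_prod_range (fun s => q ^ finrank K V - q ^ s) d] at hcards
  rw [hcards, Finset.sum_congr rfl (fun W _ => hfib W), Finset.sum_const,
    Nat.card_eq_fintype_card, smul_eq_mul, Fintype.card, Finset.card_univ]


lemma gauss_factor (m d : ℕ) (hdm : d ≤ m) :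
    ∏ s ∈ Finset.range d, (q ^ m - q ^ s) =
      (∏ s ∈ Finset.range d, q ^ s) * ∏ s ∈ Finset.range d, (q ^ (m - s) - 1) := by
  rw [← Finset.prod_mul_distrib]
  refine Finset.prod_congr rfl fun s hs => ?_
  rw [Finset.mem_range] at hs
  rw [Nat.mul_sub, mul_one, ← pow_add]
  congr 2
  omega

lemma gauss_reflect (d : ℕ) :
    ∏ s ∈ Finset.range d, (q ^ (d - s) - 1) =
      ∏ s ∈ Finset.range d, (q ^ (s + 1) - 1) := by
  rw [← Finset.prod_range_reflect (fun j => q ^ (j + 1) - 1) d]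
  refine Finset.prod_congr rfl fun s hs => ?_
  rw [Finset.mem_range] at hs
  congr 2
  omega

lemma card_submodule_eq_gauss (d : ℕ) (hd : d ≤ finrank K V) :
    Nat.card {W : Submodule K V // finrank K ↥W = d} =
      gaussBinom q (finrank K V) d := by
  have hq : 2 ≤ q := Fintype.one_lt_card
  have hmul := card_submodule_mul (V := V) d hd
  rw [gauss_factor d d le_rfl, gauss_factor (finrank K V) d hd] at hmul
  have hE : 0 < ∏ s ∈ Finset.range d, q ^ s :=
    Finset.prod_pos (fun s _ => pow_pos (by omega) s)
  have hP1 : 0 < ∏ s ∈ Finset.range d, (q ^ (s + 1) - 1) := by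
    apply Finset.prod_pos
    intro s _
    have : 2 ≤ q ^ (s + 1) := le_trans hq (Nat.le_self_pow (by omega) q)
    omega
  rw [← mul_assoc, mul_comm _ (∏ s ∈ Finset.range d, q ^ s), mul_assoc] at hmul
  have hmul2 := Nat.eq_of_mul_eq_mul_left hE hmul
  rw [gauss_reflect] at hmul2
  have hNP : Nat.card {W : Submodule K V // finrank K ↥W = d} *
      ∏ s ∈ Finset.range d, (q ^ (s + 1) - 1) =
      ∏ s ∈ Finset.range d, (q ^ (finrank K V - s) - 1) := hmul2
  unfold gaussBinom
  exact (Nat.div_eq_of_eq_mul_left hP1 hNP.symm).symm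


lemma ker_le_comap' (W : Submodule K V) (p : Submodule K (V ⧸ W)) :
    W ≤ p.comap W.mkQ := by
  intro x hx
  simp [Submodule.mem_comap, (Submodule.Quotient.mk_eq_zero W).mpr hx,
    Submodule.mkQ_apply]

end Aux

lemma chain_le {α : Type*} [Preorder α] (r : ℕ) (f : ℕ → α)
    (h : ∀ j, 1 ≤ j → j < r → f j ≤ f (j + 1)) :
    ∀ a, 1 ≤ a → ∀ b, a ≤ b → b ≤ r → f a ≤ f b := by
  intro a ha b hab
  induction b, hab using Nat.le_induction with
  | base => intro _; exact le_refl _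
  | succ n hn ih => intro hnr; exact le_trans (ih (by omega)) (h n (by omega) (by omega))

section Flags

variable {K V : Type*} [Field K] [Fintype K] [AddCommGroup V] [Module K V]
  [FiniteDimensional K V]

lemma flagFinite (M : ℕ) (d : ℕ → ℕ) :
    Finite {G : ℕ → Submodule K V //
        (∀ l, 1 ≤ l → l ≤ M → finrank K ↥(G l) = d l) ∧
        (∀ l, 1 ≤ l → l < M → G l ≤ G (l + 1)) ∧
        (∀ l, ¬(1 ≤ l ∧ l ≤ M) → G l = ⊥)} := by
  have : Finite V := auxFiniteV V K
  have : Finite (Submodule K V) := auxFiniteSub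
  apply Finite.of_injective
    (fun G : {G : ℕ → Submodule K V //
        (∀ l, 1 ≤ l → l ≤ M → finrank K ↥(G l) = d l) ∧
        (∀ l, 1 ≤ l → l < M → G l ≤ G (l + 1)) ∧
        (∀ l, ¬(1 ≤ l ∧ l ≤ M) → G l = ⊥)} => (fun k : Fin (M + 1) => G.1 k.1))
  intro G G' h
  apply Subtype.ext
  funext l
  by_cases hl : l ≤ M
  · exact congrFun h ⟨l, by omega⟩
  · rw [G.2.2.2 l (by omega), G'.2.2.2 l (by omega)]

end Flags

universe v

lemma card_flags {K : Type*} [Field K] [Fintype K] :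
    ∀ (M : ℕ), 1 ≤ M →
    ∀ (V : Type v) [AddCommGroup V] [Module K V] [FiniteDimensional K V],
    ∀ (d : ℕ → ℕ), (∀ l, 1 ≤ l → l < M → d l ≤ d (l + 1)) → d M ≤ finrank K V →
    Nat.card {G : ℕ → Submodule K V //
        (∀ l, 1 ≤ l → l ≤ M → finrank K ↥(G l) = d l) ∧
        (∀ l, 1 ≤ l → l < M → G l ≤ G (l + 1)) ∧
        (∀ l, ¬(1 ≤ l ∧ l ≤ M) → G l = ⊥)} =
      gaussBinom (Fintype.card K) (finrank K V) (d 1) *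
        ∏ l ∈ Finset.Icc 2 M,
          gaussBinom (Fintype.card K) (finrank K V - d (l - 1)) (d l - d (l - 1)) := by
  intro M hM
  induction M, hM using Nat.le_induction with
  | base =>
    intro V _ _ _ d _ hd1
    have e : {G : ℕ → Submodule K V //
        (∀ l, 1 ≤ l → l ≤ 1 → finrank K ↥(G l) = d l) ∧
        (∀ l, 1 ≤ l → l < 1 → G l ≤ G (l + 1)) ∧
        (∀ l, ¬(1 ≤ l ∧ l ≤ 1) → G l = ⊥)} ≃
        {W : Submodule K V // finrank K ↥W = d 1} :=
      { toFun := fun G => ⟨G.1 1, G.2.1 1 le_rfl le_rfl⟩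
        invFun := fun W => ⟨fun l => if l = 1 then W.1 else ⊥, by
          refine ⟨?_, ?_, ?_⟩
          · intro l h1 h2
            beta_reduce
            have : l = 1 := by omega
            subst this
            simpa using W.2
          · intro l h1 h2; omega
          · intro l hl
            beta_reduce
            rw [if_neg (by omega)]⟩
        left_inv := fun G => by
          apply Subtype.ext
          funext l
          by_cases hl : l = 1
          · subst hl; simp
          · show (if l = 1 then G.1 1 else ⊥) = G.1 l
            rw [if_neg hl, G.2.2.2 l (by omega)]
        right_inv := fun W => by apply Subtype.ext; simp }
    rw [Nat.card_congr e, card_submodule_eq_gauss (d 1) hd1]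
    simp
  | succ M hM ih =>
    intro V _ _ _ d hmono hdtop
    have dle : ∀ a, 1 ≤ a → ∀ b, a ≤ b → b ≤ M + 1 → d a ≤ d b :=
      chain_le (M + 1) d hmono
    have hd1 : d 1 ≤ finrank K V := le_trans (dle 1 le_rfl (M+1) (by omega) le_rfl) hdtop
    have : Finite V := auxFiniteV V K
    have : Finite (Submodule K V) := auxFiniteSub
    haveI : Fintype {W : Submodule K V // finrank K ↥W = d 1} := Fintype.ofFinite _
    set FT := {G : ℕ → Submodule K V //
        (∀ l, 1 ≤ l → l ≤ M + 1 → finrank K ↥(G l) = d l) ∧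
        (∀ l, 1 ≤ l → l < M + 1 → G l ≤ G (l + 1)) ∧
        (∀ l, ¬(1 ≤ l ∧ l ≤ M + 1) → G l = ⊥)} with hFT
    haveI : Finite FT := flagFinite (M + 1) d
    set π : FT → {W : Submodule K V // finrank K ↥W = d 1} :=
      fun G => ⟨G.1 1, G.2.1 1 le_rfl (by omega)⟩ with hπ
    haveI : ∀ W : {W : Submodule K V // finrank K ↥W = d 1},
        Fintype {G : FT // π G = W} := fun W => Fintype.ofFinite _
    haveI : Fintype FT := Fintype.ofFinite _
    have hcards : Nat.card FT =
        ∑ W : {W : Submodule K V // finrank K ↥W = d 1}, Nat.card {G : FT // π G = W} := by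
      rw [← Nat.card_congr (Equiv.sigmaFiberEquiv π)]
      simp [Nat.card_eq_fintype_card]
    -- fiber computation
    have hfiber : ∀ W : {W : Submodule K V // finrank K ↥W = d 1},
        Nat.card {G : FT // π G = W} =
        Nat.card {G' : ℕ → Submodule K (V ⧸ W.1) //
          (∀ l, 1 ≤ l → l ≤ M → finrank K ↥(G' l) = d (l + 1) - d 1) ∧
          (∀ l, 1 ≤ l → l < M → G' l ≤ G' (l + 1)) ∧
          (∀ l, ¬(1 ≤ l ∧ l ≤ M) → G' l = ⊥)} := by
      intro W
      apply Nat.card_congr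
      refine
      { toFun := fun G => ⟨fun l => Submodule.map W.1.mkQ (G.1.1 (l + 1)), ?_, ?_, ?_⟩
        invFun := fun G' => ⟨⟨fun l =>
            if 2 ≤ l ∧ l ≤ M + 1 then Submodule.comap W.1.mkQ (G'.1 (l - 1))
            else if l = 1 then W.1 else ⊥, ?_, ?_, ?_⟩, ?_⟩
        left_inv := ?_
        right_inv := ?_ }
      · -- dims of image flag
        intro l h1 h2
        beta_reduce
        have hGW : G.1.1 1 = W.1 := congrArg Subtype.val G.2
        have hWle : W.1 ≤ G.1.1 (l + 1) := by
          rw [← hGW]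
          exact chain_le (M + 1) G.1.1 G.1.2.2.1 1 le_rfl (l + 1) (by omega) (by omega)
        have hfr := finrank_map_mkQ W.1 (G.1.1 (l + 1)) hWle
        have h1' := G.1.2.1 (l + 1) (by omega) (by omega)
        have h2' := W.2
        omega
      · -- nested image flag
        intro l h1 h2
        beta_reduce
        exact Submodule.map_mono (G.1.2.2.1 (l + 1) (by omega) (by omega))
      · -- outside image flag
        intro l hl
        beta_reduce
        by_cases h0 : l = 0
        · subst h0
          have hGW : G.1.1 1 = W.1 := congrArg Subtype.val G.2
          rw [hGW, map_mkQ_self]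
        · rw [G.1.2.2.2 (l + 1) (by omega), Submodule.map_bot]
      · -- dims of preimage flag
        intro l h1 h2
        beta_reduce
        by_cases hl : 2 ≤ l ∧ l ≤ M + 1
        · rw [if_pos hl, finrank_comap_mkQ]
          have := G'.2.1 (l - 1) (by omega) (by omega)
          have h3 : l - 1 + 1 = l := by omega
          rw [h3] at this
          have h4 := dle 1 le_rfl l (by omega) (by omega)
          have h5 := W.2
          omega
        · have : l = 1 := by omega
          subst this
          rw [if_neg (by omega), if_pos rfl]
          exact W.2
      · -- nested preimage flag
        intro l h1 h2
        beta_reduce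
        by_cases hl : l = 1
        · subst hl
          rw [if_neg (by omega), if_pos rfl, if_pos (by omega)]
          exact ker_le_comap' W.1 _
        · rw [if_pos (by omega : 2 ≤ l ∧ l ≤ M + 1), if_pos (by omega : 2 ≤ l + 1 ∧ l + 1 ≤ M + 1)]
          apply Submodule.comap_mono
          have := G'.2.2.1 (l - 1) (by omega) (by omega)
          have h3 : l - 1 + 1 = l := by omega
          rw [h3] at this
          simpa using this
      · -- outside preimage flag
        intro l hl
        beta_reduce
        rw [if_neg (by omega), if_neg (by omega)]
      · -- fiber condition
        apply Subtype.ext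
        show (if 2 ≤ 1 ∧ 1 ≤ M + 1 then Submodule.comap W.1.mkQ (G'.1 (1 - 1))
          else if (1:ℕ) = 1 then W.1 else ⊥) = W.1
        rw [if_neg (by omega), if_pos rfl]
      · -- left inverse
        intro G
        apply Subtype.ext
        apply Subtype.ext
        funext l
        have hGW : G.1.1 1 = W.1 := congrArg Subtype.val G.2
        by_cases hl : 2 ≤ l ∧ l ≤ M + 1
        · have h3 : l - 1 + 1 = l := by omega
          show (if 2 ≤ l ∧ l ≤ M + 1 then
              Submodule.comap W.1.mkQ (Submodule.map W.1.mkQ (G.1.1 (l - 1 + 1)))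
            else if l = 1 then W.1 else ⊥) = G.1.1 l
          rw [if_pos hl, h3, Submodule.comap_map_eq, Submodule.ker_mkQ, sup_eq_left.mpr]
          rw [← hGW]
          exact chain_le (M + 1) G.1.1 G.1.2.2.1 1 le_rfl l (by omega) (by omega)
        · by_cases hl1 : l = 1
          · subst hl1
            show (if 2 ≤ 1 ∧ 1 ≤ M + 1 then
                Submodule.comap W.1.mkQ (Submodule.map W.1.mkQ (G.1.1 (1 - 1 + 1)))
              else if (1:ℕ) = 1 then W.1 else ⊥) = G.1.1 1
            rw [if_neg (by omega), if_pos rfl, hGW]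
          · show (if 2 ≤ l ∧ l ≤ M + 1 then
                Submodule.comap W.1.mkQ (Submodule.map W.1.mkQ (G.1.1 (l - 1 + 1)))
              else if l = 1 then W.1 else ⊥) = G.1.1 l
            rw [if_neg hl, if_neg hl1, G.1.2.2.2 l (by omega)]
      · -- right inverse
        intro G'
        apply Subtype.ext
        funext l
        by_cases hl : 1 ≤ l ∧ l ≤ M
        · show Submodule.map W.1.mkQ
            (if 2 ≤ l + 1 ∧ l + 1 ≤ M + 1 then Submodule.comap W.1.mkQ (G'.1 (l + 1 - 1))
             else if l + 1 = 1 then W.1 else ⊥) = G'.1 l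
          rw [if_pos (by omega)]
          exact Submodule.map_comap_eq_of_surjective (Submodule.mkQ_surjective W.1) _
        · by_cases h0 : l = 0
          · subst h0
            show Submodule.map W.1.mkQ
              (if 2 ≤ 1 ∧ 1 ≤ M + 1 then Submodule.comap W.1.mkQ (G'.1 (1 - 1))
               else if (1:ℕ) = 1 then W.1 else ⊥) = G'.1 0
            rw [if_neg (by omega), if_pos rfl, map_mkQ_self, G'.2.2.2 0 (by omega)]
          · show Submodule.map W.1.mkQ
              (if 2 ≤ l + 1 ∧ l + 1 ≤ M + 1 then _ else if l + 1 = 1 then W.1 else ⊥) = G'.1 l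
            rw [if_neg (by omega), if_neg (by omega), Submodule.map_bot,
              G'.2.2.2 l (by omega)]
    -- quotient dimension
    have hquot : ∀ W : {W : Submodule K V // finrank K ↥W = d 1},
        finrank K (V ⧸ W.1) = finrank K V - d 1 := by
      intro W
      have h1 := Submodule.finrank_quotient_add_finrank W.1
      have h2 := W.2
      omega
    have hfibval : ∀ W : {W : Submodule K V // finrank K ↥W = d 1},
        Nat.card {G : FT // π G = W} =
        gaussBinom (Fintype.card K) (finrank K V - d 1) (d 2 - d 1) *
          ∏ l ∈ Finset.Icc 2 M,
            gaussBinom (Fintype.card K) (finrank K V - d l) (d (l + 1) - d l) := by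
      intro W
      rw [hfiber W]
      have ihW : Nat.card {G' : ℕ → Submodule K (V ⧸ W.1) //
          (∀ l, 1 ≤ l → l ≤ M → finrank K ↥(G' l) = d (l + 1) - d 1) ∧
          (∀ l, 1 ≤ l → l < M → G' l ≤ G' (l + 1)) ∧
          (∀ l, ¬(1 ≤ l ∧ l ≤ M) → G' l = ⊥)} =
        gaussBinom (Fintype.card K) (finrank K (V ⧸ W.1)) (d (1 + 1) - d 1) *
          ∏ l ∈ Finset.Icc 2 M,
            gaussBinom (Fintype.card K) (finrank K (V ⧸ W.1) - (d (l - 1 + 1) - d 1))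
              (d (l + 1) - d 1 - (d (l - 1 + 1) - d 1)) := ih (V ⧸ W.1)
        (fun l => d (l + 1) - d 1)
        (fun l h1 h2 => by
          show d (l + 1) - d 1 ≤ d (l + 1 + 1) - d 1
          have h3 := hmono (l + 1) (by omega) (by omega)
          have h4 := dle 1 le_rfl (l + 1) (by omega) (by omega)
          omega)
        (by
          show d (M + 1) - d 1 ≤ finrank K (V ⧸ W.1)
          rw [hquot W]
          omega)
      rw [ihW, hquot W]
      clear ihW
      have hprod : ∀ l ∈ Finset.Icc 2 M,
          gaussBinom (Fintype.card K) (finrank K V - d 1 - (d (l - 1 + 1) - d 1))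
            (d (l + 1) - d 1 - (d (l - 1 + 1) - d 1)) =
          gaussBinom (Fintype.card K) (finrank K V - d l) (d (l + 1) - d l) := by
        intro l hl
        rw [Finset.mem_Icc] at hl
        have h3 : l - 1 + 1 = l := by omega
        rw [h3]
        have h4 := dle 1 le_rfl l (by omega) (by omega)
        have h5 := dle l (by omega) (M + 1) (by omega) le_rfl
        have h6 := dle l (by omega) (l + 1) (by omega) (by omega)
        congr 1
        · omega
        · omega
      rw [Finset.prod_congr rfl hprod]
    have hsum : Nat.card FT =
        Fintype.card {W : Submodule K V // finrank K ↥W = d 1} *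
          (gaussBinom (Fintype.card K) (finrank K V - d 1) (d 2 - d 1) *
            ∏ l ∈ Finset.Icc 2 M,
              gaussBinom (Fintype.card K) (finrank K V - d l) (d (l + 1) - d l)) := by
      rw [hcards, Finset.sum_congr rfl (fun W _ => hfibval W), Finset.sum_const,
        smul_eq_mul, Fintype.card, Finset.card_univ]
    have hcW : Fintype.card {W : Submodule K V // finrank K ↥W = d 1} =
        gaussBinom (Fintype.card K) (finrank K V) (d 1) := by
      rw [← Nat.card_eq_fintype_card]
      exact card_submodule_eq_gauss (d 1) hd1
    have hsplit : ∏ l ∈ Finset.Icc 2 (M + 1),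
        gaussBinom (Fintype.card K) (finrank K V - d (l - 1)) (d l - d (l - 1)) =
        gaussBinom (Fintype.card K) (finrank K V - d 1) (d 2 - d 1) *
          ∏ l ∈ Finset.Icc 2 M,
            gaussBinom (Fintype.card K) (finrank K V - d l) (d (l + 1) - d l) := by
      have h1 : Finset.Icc 2 (M + 1) = insert 2 (Finset.Icc 3 (M + 1)) := by
        ext x
        simp only [Finset.mem_Icc, Finset.mem_insert]
        omega
      rw [h1, Finset.prod_insert (by simp)]
      congr 1
      have h2 : Finset.Icc 3 (M + 1) = Finset.image (· + 1) (Finset.Icc 2 M) := by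
        ext x
        simp only [Finset.mem_Icc, Finset.mem_image]
        constructor
        · intro h
          exact ⟨x - 1, by omega, by omega⟩
        · rintro ⟨a, ha, rfl⟩
          omega
      rw [h2, Finset.prod_image (by intro a _ b _ h; beta_reduce at h; omega)]
      simp
    rw [hsum, hcW, hsplit]


theorem stmt16 {K : Type*} [Field K] [Fintype K] (n r M : ℕ) (hn : 2 ≤ n) (hr : 1 ≤ r)
    (hM : 1 ≤ M) (hMr : M ≤ r)
    (t : ℕ → ℕ) (ht1 : 1 ≤ t 1) (htr : t r < n)
    (htmono : ∀ j, 1 ≤ j → j < r → t j < t (j + 1))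
    (i : ℕ → ℕ) (hi1 : 1 ≤ i 1) (hiM : i M ≤ r)
    (himono : ∀ l, 1 ≤ l → l < M → i l < i (l + 1))
    (C : Set (ℕ → Submodule K (Fin n → K)))
    (hdim : ∀ F ∈ C, ∀ j, 1 ≤ j → j ≤ r → finrank K ↥(F j) = t j)
    (hnest : ∀ F ∈ C, ∀ j, 1 ≤ j → j < r → F j ≤ F (j + 1))
    -- flags of `C` that agree on all positions `1, ..., r` are equal (as elements of `C`)
    (hext : ∀ F ∈ C, ∀ F' ∈ C, (∀ j, 1 ≤ j → j ≤ r → F j = F' j) → F = F')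
    -- `d_f(C) > D(i_1,...,i_M)^{(t,n)}`: every pair of distinct flags of `C` is at
    -- distance greater than `D(i_1,...,i_M)^{(t,n)}`
    (hd : ∀ F ∈ C, ∀ F' ∈ C, (∃ j, 1 ≤ j ∧ j ≤ r ∧ F j ≠ F' j) →
      DmultiType n r M hM t i < flagDist r F F') :
    Nat.card C ≤
      Nat.card {G : ℕ → Submodule K (Fin n → K) //
        (∀ l, 1 ≤ l → l ≤ M → finrank K ↥(G l) = t (i l)) ∧
        (∀ l, 1 ≤ l → l < M → G l ≤ G (l + 1)) ∧
        (∀ l, ¬(1 ≤ l ∧ l ≤ M) → G l = ⊥)} ∧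
    Nat.card {G : ℕ → Submodule K (Fin n → K) //
        (∀ l, 1 ≤ l → l ≤ M → finrank K ↥(G l) = t (i l)) ∧
        (∀ l, 1 ≤ l → l < M → G l ≤ G (l + 1)) ∧
        (∀ l, ¬(1 ≤ l ∧ l ≤ M) → G l = ⊥)} =
      gaussBinom (Fintype.card K) n (t (i 1)) *
        ∏ l ∈ Finset.Icc 2 M,
          gaussBinom (Fintype.card K) (n - t (i (l - 1))) (t (i l) - t (i (l - 1))) := by
  have hfr : finrank K (Fin n → K) = n := by simp
  have tle : ∀ a, 1 ≤ a → ∀ b, a ≤ b → b ≤ r → t a ≤ t b :=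
    chain_le r t (fun j h1 h2 => le_of_lt (htmono j h1 h2))
  have iile : ∀ a, 1 ≤ a → ∀ b, a ≤ b → b ≤ M → i a ≤ i b :=
    chain_le M i (fun l h1 h2 => le_of_lt (himono l h1 h2))
  have hil : ∀ l, 1 ≤ l → l ≤ M → 1 ≤ i l ∧ i l ≤ r := fun l h1 h2 =>
    ⟨le_trans hi1 (iile 1 le_rfl l h1 h2), le_trans (iile l h1 M h2 le_rfl) hiM⟩
  constructor
  · -- the injectivity bound
    haveI : Finite {G : ℕ → Submodule K (Fin n → K) //
        (∀ l, 1 ≤ l → l ≤ M → finrank K ↥(G l) = t (i l)) ∧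
        (∀ l, 1 ≤ l → l < M → G l ≤ G (l + 1)) ∧
        (∀ l, ¬(1 ≤ l ∧ l ≤ M) → G l = ⊥)} := flagFinite M (fun l => t (i l))
    refine Nat.card_le_card_of_injective
      (fun F : ↥C => (⟨fun l => if 1 ≤ l ∧ l ≤ M then F.1 (i l) else ⊥, ?_, ?_, ?_⟩ :
        {G : ℕ → Submodule K (Fin n → K) //
        (∀ l, 1 ≤ l → l ≤ M → finrank K ↥(G l) = t (i l)) ∧
        (∀ l, 1 ≤ l → l < M → G l ≤ G (l + 1)) ∧
        (∀ l, ¬(1 ≤ l ∧ l ≤ M) → G l = ⊥)})) ?_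
    · intro l h1 h2
      beta_reduce
      rw [if_pos ⟨h1, h2⟩]
      exact hdim F.1 F.2 (i l) (hil l h1 h2).1 (hil l h1 h2).2
    · intro l h1 h2
      beta_reduce
      rw [if_pos ⟨h1, by omega⟩, if_pos ⟨by omega, by omega⟩]
      exact chain_le r F.1 (hnest F.1 F.2) (i l) (hil l h1 (by omega)).1 (i (l + 1))
        (le_of_lt (himono l h1 h2)) (hil (l + 1) (by omega) (by omega)).2
    · intro l hl
      beta_reduce
      rw [if_neg hl]
    · -- injectivity
      intro F F' h
      have key : ∀ l, 1 ≤ l → l ≤ M → F.1 (i l) = F'.1 (i l) := by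
        intro l h1 h2
        have := congrFun (congrArg Subtype.val h) l
        simpa [if_pos (⟨h1, h2⟩ : 1 ≤ l ∧ l ≤ M)] using this
      apply Subtype.ext
      by_contra hFne
      have hne : ∃ j, 1 ≤ j ∧ j ≤ r ∧ F.1 j ≠ F'.1 j := by
        by_contra h'
        push_neg at h'
        exact hFne (hext F.1 F.2 F'.1 F'.2 (fun j hj1 hj2 => h' j hj1 hj2))
      have hlow := hd F.1 F.2 F'.1 F'.2 hne
      have hub : flagDist r F.1 F'.1 ≤ DmultiType n r M hM t i := by
        unfold flagDist DmultiType
        apply Finset.sum_le_sum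
        intro j hj
        rw [Finset.mem_Icc] at hj
        have hU : finrank K ↥(F.1 j) = t j := hdim F.1 F.2 j hj.1 hj.2
        have hV : finrank K ↥(F'.1 j) = t j := hdim F'.1 F'.2 j hj.1 hj.2
        have hS := Submodule.finrank_sup_add_finrank_inf_eq (F.1 j) (F'.1 j)
        have hsupn : finrank K ↥(F.1 j ⊔ F'.1 j) ≤ n := by
          have := Submodule.finrank_le (F.1 j ⊔ F'.1 j)
          omega
        have hUsup : finrank K ↥(F.1 j) ≤ finrank K ↥(F.1 j ⊔ F'.1 j) :=
          Submodule.finrank_mono le_sup_left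
        have hinfU : finrank K ↥(F.1 j ⊓ F'.1 j) ≤ finrank K ↥(F.1 j) :=
          Submodule.finrank_mono inf_le_left
        unfold subDist
        refine le_min (by omega) (le_min (by omega) ?_)
        apply Finset.le_inf'
        intro l hl
        rw [Finset.mem_Icc] at hl
        obtain ⟨hil1, hil2⟩ := hil l hl.1 hl.2
        have hWd : finrank K ↥(F.1 (i l)) = t (i l) := hdim F.1 F.2 (i l) hil1 hil2
        rcases le_or_gt j (i l) with hcase | hcase
        · have h1 : F.1 j ≤ F.1 (i l) :=
            chain_le r F.1 (hnest F.1 F.2) j hj.1 (i l) hcase hil2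
          have h2 : F'.1 j ≤ F.1 (i l) := by
            rw [key l hl.1 hl.2]
            exact chain_le r F'.1 (hnest F'.1 F'.2) j hj.1 (i l) hcase hil2
          have hsup_le : finrank K ↥(F.1 j ⊔ F'.1 j) ≤ finrank K ↥(F.1 (i l)) :=
            Submodule.finrank_mono (sup_le h1 h2)
          omega
        · have h1 : F.1 (i l) ≤ F.1 j :=
            chain_le r F.1 (hnest F.1 F.2) (i l) hil1 j (le_of_lt hcase) hj.2
          have h2 : F.1 (i l) ≤ F'.1 j := by
            rw [key l hl.1 hl.2]
            exact chain_le r F'.1 (hnest F'.1 F'.2) (i l) hil1 j (le_of_lt hcase) hj.2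
          have hinf_ge : finrank K ↥(F.1 (i l)) ≤ finrank K ↥(F.1 j ⊓ F'.1 j) :=
            Submodule.finrank_mono (le_inf h1 h2)
          omega
      omega
  · -- the counting formula
    have hmono' : ∀ l, 1 ≤ l → l < M → t (i l) ≤ t (i (l + 1)) := by
      intro l h1 h2
      exact tle (i l) (hil l h1 (by omega)).1 (i (l + 1)) (le_of_lt (himono l h1 h2))
        (hil (l + 1) (by omega) (by omega)).2
    have htop : t (i M) ≤ finrank K (Fin n → K) := by
      rw [hfr]
      have : t (i M) ≤ t r := tle (i M) (hil M hM le_rfl).1 r hiM le_rfl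
      omega
    have := card_flags M hM (Fin n → K) (fun l => t (i l)) hmono' htop
    rwa [hfr] at this
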